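/- Let f : ℝⁿ → ℝⁿ be continuous and let S ⊆ ℝⁿ be bounded, TR = {x | ∀k ∈ {1,…,K}, γ_k(x) < 0} with each γ_k continuous. Suppose θ, ψ : ℝⁿ → ℝ are continuously differentiable and satisfy: (1) ⟨∇θ(x), f(x)⟩ ≤ 0 for all x ∈ S \ TR; (2) θ(x) ≥ max_k γ_k(x) + ⟨∇ψ(x), f(x)⟩ for all x ∈ S \ TR; (3) θ(x) ≥ 0 for all x ∈ ∂S. Let x₀ ∈ S with θ(x₀) < 0, and let φ(x₀, ·) be the solution of ẋ = f(x) from x₀, assumed to exist for all t ≥ 0. Then there exists T ≥ 0 such that φ(x₀, T) ∈ TR and φ(x₀, t) ∈ S for all t ∈ [0, T]. -/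

import Mathlib

open Topology Filter Set


/-- Theorem 6, inner-approximation guarantee: under the
certificate conditions (1)-(3) on θ and ψ, any initial state x₀ ∈ S with
θ(x₀) < 0 reaches TR while staying in S.  Condition (2), θ ≥ max_k γ_k + ⟨∇ψ,f⟩,
is expressed equivalently as the conjunction over all k. -/
theorem stmt_6 {n K : ℕ}
    (f : EuclideanSpace ℝ (Fin n) → EuclideanSpace ℝ (Fin n)) (hf : Continuous f)
    (S : Set (EuclideanSpace ℝ (Fin n))) (hSb : Bornology.IsBounded S)
    (γ : Fin K → EuclideanSpace ℝ (Fin n) → ℝ) (hγ : ∀ k, Continuous (γ k))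
    (TR : Set (EuclideanSpace ℝ (Fin n))) (hTR : TR = {x | ∀ k, γ k x < 0})
    (θ ψ : EuclideanSpace ℝ (Fin n) → ℝ)
    (hθ : ContDiff ℝ 1 θ) (hψ : ContDiff ℝ 1 ψ)
    (h1 : ∀ x ∈ S \ TR, fderiv ℝ θ x (f x) ≤ 0)
    (h2 : ∀ x ∈ S \ TR, ∀ k, γ k x + fderiv ℝ ψ x (f x) ≤ θ x)
    (h3 : ∀ x ∈ frontier S, 0 ≤ θ x)
    (x₀ : EuclideanSpace ℝ (Fin n)) (hx₀ : x₀ ∈ S) (hθx₀ : θ x₀ < 0)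
    (φ : ℝ → EuclideanSpace ℝ (Fin n)) (hφ0 : φ 0 = x₀)
    (hφ : ∀ t : ℝ, HasDerivAt φ (f (φ t)) t) :
    ∃ T : ℝ, 0 ≤ T ∧ φ T ∈ TR ∧ ∀ t, 0 ≤ t → t ≤ T → φ t ∈ S := by
  classical
  have hφc : Continuous φ := continuous_iff_continuousAt.mpr fun t => (hφ t).continuousAt
  have hθφ : ∀ t, HasDerivAt (fun s => θ (φ s)) (fderiv ℝ θ (φ t) (f (φ t))) t := fun t =>
    ((hθ.differentiable one_ne_zero (φ t)).hasFDerivAt).comp_hasDerivAt t (hφ t)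
  have hψφ : ∀ t, HasDerivAt (fun s => ψ (φ s)) (fderiv ℝ ψ (φ t) (f (φ t))) t := fun t =>
    ((hψ.differentiable one_ne_zero (φ t)).hasFDerivAt).comp_hasDerivAt t (hφ t)
  -- x₀ is in the interior of S
  have hx₀i : x₀ ∈ interior S := by
    by_contra h
    have hfr : x₀ ∈ frontier S := ⟨subset_closure hx₀, h⟩
    exact absurd (h3 _ hfr) (not_le.mpr hθx₀)
  -- monotonicity lemma
  have mono : ∀ c : ℝ, (∀ t, 0 ≤ t → t < c → φ t ∈ S \ TR) →
      ∀ t, 0 ≤ t → t ≤ c → θ (φ t) ≤ θ x₀ := by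
    intro c hin t ht htc
    have hanti : AntitoneOn (fun s => θ (φ s)) (Set.Icc 0 c) := by
      apply antitoneOn_of_deriv_nonpos (convex_Icc 0 c)
      · exact ((hθ.continuous.comp hφc).continuousOn)
      · intro x _; exact ((hθφ x).differentiableAt.differentiableWithinAt)
      · intro x hx
        rw [interior_Icc] at hx
        rw [(hθφ x).deriv]
        exact h1 _ (hin x hx.1.le hx.2)
    have h0c : (0:ℝ) ∈ Set.Icc 0 c := ⟨le_rfl, ht.trans htc⟩
    have := hanti h0c ⟨ht, htc⟩ ht
    simpa [hφ0] using this
  -- core lemma: if trajectory avoids TR on [0,b), it stays in interior S on [0,b]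
  have core : ∀ b : ℝ, (∀ t, 0 ≤ t → t < b → φ t ∉ TR) →
      ∀ t, 0 ≤ t → t ≤ b → φ t ∈ interior S ∧ θ (φ t) ≤ θ x₀ := by
    intro b hav
    rcases Set.eq_empty_or_nonempty {t | t ∈ Set.Icc (0:ℝ) b ∧ φ t ∉ interior S} with hC | hC
    · intro t ht htb
      have hint : ∀ s, 0 ≤ s → s ≤ b → φ s ∈ interior S := by
        intro s hs hsb
        by_contra h
        exact Set.eq_empty_iff_forall_notMem.mp hC s ⟨⟨hs, hsb⟩, h⟩
      refine ⟨hint t ht htb, mono b (fun s hs hsb => ⟨interior_subset (hint s hs hsb.le),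
        hav s hs hsb⟩) t ht htb⟩
    · exfalso
      set C := {t | t ∈ Set.Icc (0:ℝ) b ∧ φ t ∉ interior S} with hCdef
      have hCc : IsClosed C := by
        have : C = Set.Icc (0:ℝ) b ∩ φ ⁻¹' (interior S)ᶜ := by
          ext t; exact Iff.rfl
        rw [this]
        exact isClosed_Icc.inter (isOpen_interior.isClosed_compl.preimage hφc)
      have hbdd : BddBelow C := ⟨0, fun t ht => ht.1.1⟩
      set c := sInf C with hc
      have hcC : c ∈ C := hCc.csInf_mem hC hbdd
      have hc0 : 0 < c := by
        rcases lt_or_eq_of_le hcC.1.1 with h | h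
        · exact h
        · exact absurd hcC.2 (by rw [← h, hφ0]; exact fun h' => h' hx₀i)
      have hint : ∀ s, 0 ≤ s → s < c → φ s ∈ interior S := by
        intro s hs hsc
        by_contra h
        have : s ∈ C := ⟨⟨hs, hsc.le.trans hcC.1.2⟩, h⟩
        exact absurd (csInf_le hbdd this) (not_le.mpr hsc)
      have hθc : θ (φ c) ≤ θ x₀ :=
        mono c (fun s hs hsc => ⟨interior_subset (hint s hs hsc),
          hav s hs (lt_of_lt_of_le hsc hcC.1.2)⟩) c hc0.le le_rfl
      have hclos : φ c ∈ closure S := by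
        have hne : (𝓝[Set.Ioo 0 c] c).NeBot := by
          rw [← mem_closure_iff_nhdsWithin_neBot, closure_Ioo hc0.ne]
          exact ⟨hc0.le, le_rfl⟩
        refine mem_closure_of_tendsto
          (hφc.continuousAt.tendsto.mono_left (nhdsWithin_le_nhds (s := Set.Ioo 0 c))) ?_
        filter_upwards [self_mem_nhdsWithin] with s hs
        exact interior_subset (hint s hs.1.le hs.2)
      have : φ c ∈ frontier S := ⟨hclos, hcC.2⟩
      linarith [h3 _ this]
  -- Step 1: the trajectory reaches TR at some time
  have hreach : ∃ t : ℝ, 0 ≤ t ∧ φ t ∈ TR := by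
    by_contra h
    push_neg at h
    have hav : ∀ t, 0 ≤ t → φ t ∉ TR := fun t ht => h t ht
    have hcore : ∀ t, 0 ≤ t → φ t ∈ interior S ∧ θ (φ t) ≤ θ x₀ := fun t ht =>
      core t (fun s hs hsb => hav s hs) t ht le_rfl
    -- g is antitone on [0, ∞)
    have hg : AntitoneOn (fun t => ψ (φ t) - θ x₀ * t) (Set.Ici 0) := by
      apply antitoneOn_of_deriv_nonpos (convex_Ici 0)
      · exact ((hψ.continuous.comp hφc).sub (continuous_const.mul continuous_id)).continuousOn
      · intro t _
        exact (((hψφ t).sub (((hasDerivAt_id t).const_mul (θ x₀)))).differentiableAt).differentiableWithinAt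
      · intro t ht
        rw [interior_Ici] at ht
        have hD : HasDerivAt (fun t => ψ (φ t) - θ x₀ * t)
            (fderiv ℝ ψ (φ t) (f (φ t)) - θ x₀) t := by
          exact ((hψφ t).sub ((hasDerivAt_id t).const_mul (θ x₀))).congr_deriv (by simp)
        rw [hD.deriv]
        obtain ⟨hiS, hθt⟩ := hcore t ht.le
        have hnotTR := hav t ht.le
        have : ∃ k, 0 ≤ γ k (φ t) := by
          by_contra hk
          push_neg at hk
          exact hnotTR (by rw [hTR]; exact fun k => hk k)
        obtain ⟨k, hk⟩ := this
        have := h2 (φ t) ⟨interior_subset hiS, hnotTR⟩ k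
        linarith
    -- lower bound of ψ on closure S
    have hScomp : IsCompact (closure S) := hSb.isCompact_closure
    obtain ⟨y, hy, hmin⟩ := hScomp.exists_isMinOn ⟨x₀, subset_closure hx₀⟩
      (hψ.continuous.continuousOn)
    set t := max 1 ((ψ y - ψ x₀) / θ x₀ + 1) with htdef
    have ht0 : (0:ℝ) ≤ t := le_trans zero_le_one (le_max_left _ _)
    have hgt : (ψ y - ψ x₀) / θ x₀ < t :=
      lt_of_lt_of_le (lt_add_one _) (le_max_right _ _)
    have hmul : t * θ x₀ < ψ y - ψ x₀ := (div_lt_iff_of_neg hθx₀).mp hgt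
    have h1' := hg (Set.self_mem_Ici) (Set.mem_Ici.mpr ht0) ht0
    simp only [hφ0, mul_zero, sub_zero] at h1'
    have hφtS : φ t ∈ closure S := subset_closure (interior_subset (hcore t ht0).1)
    have hy' : ψ y ≤ ψ (φ t) := hmin hφtS
    rw [mul_comm] at hmul
    linarith
  -- Step 2: first hitting time
  obtain ⟨t₁, ht₁0, ht₁⟩ := hreach
  set A := {t : ℝ | 0 ≤ t ∧ φ t ∈ TR} with hA
  have hAne : A.Nonempty := ⟨t₁, ht₁0, ht₁⟩
  have hAbdd : BddBelow A := ⟨0, fun t ht => ht.1⟩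
  set τ := sInf A with hτ
  have hτ0 : 0 ≤ τ := le_csInf hAne fun t ht => ht.1
  have havoid : ∀ t, 0 ≤ t → t < τ → φ t ∉ TR := by
    intro t ht htτ hmem
    exact absurd (csInf_le hAbdd ⟨ht, hmem⟩) (not_le.mpr htτ)
  have hcore := core τ havoid
  have hτint : φ τ ∈ interior S := (hcore τ hτ0 le_rfl).1
  -- continuity: trajectory stays in interior S slightly after τ
  have : ∀ᶠ s in 𝓝 τ, φ s ∈ interior S :=
    hφc.continuousAt.eventually_mem (isOpen_interior.mem_nhds hτint)
  obtain ⟨ε, hε, hball⟩ := Metric.eventually_nhds_iff.mp this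
  obtain ⟨T, hTA, hTlt⟩ := Real.lt_sInf_add_pos hAne hε
  refine ⟨T, hTA.1, hTA.2, ?_⟩
  intro t ht htT
  rcases le_or_gt t τ with h | h
  · exact interior_subset (hcore t ht h).1
  · apply interior_subset
    apply hball
    have hτT : τ ≤ T := csInf_le hAbdd hTA
    rw [Real.dist_eq, abs_of_pos (by linarith)]
    linarith
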